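/- Let G be a group of affine isometries of Euclidean 3-space (a subgroup of the group of affine isometry equivalences of ℝ³), and suppose that the set of vectors t such that the translation by t belongs to G is a full-rank lattice L in ℝ³. Then for every g ∈ G the linear part of g maps L onto L, and consequently the special group G_* of G, namely the image of G under the homomorphism sending each affine isometry to its linear part in O(3), is a finite group. -/

import Mathlib

/-- If the translations contained in a group `G` of affine isometries of `ℝ³` form a
full-rank lattice `L`, then the linear part of every element of `G` maps `L` onto itself,
and the special group `G₊` of `G` (the image of `G` under the linear-part homomorphism)
is finite. -/
theorem special_group_finite
    (b : Module.Basis (Fin 3) ℝ (EuclideanSpace ℝ (Fin 3)))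
    (L : Submodule ℤ (EuclideanSpace ℝ (Fin 3)))
    (hL : L = Submodule.span ℤ (Set.range b))
    (G : Subgroup (EuclideanSpace ℝ (Fin 3) ≃ᵃⁱ[ℝ] EuclideanSpace ℝ (Fin 3)))
    (hT : {t : EuclideanSpace ℝ (Fin 3) |
      AffineIsometryEquiv.constVAdd ℝ (EuclideanSpace ℝ (Fin 3)) t ∈ G}
        = (L : Set (EuclideanSpace ℝ (Fin 3)))) :
    (∀ g ∈ G, g.linearIsometryEquiv '' (L : Set (EuclideanSpace ℝ (Fin 3)))
        = (L : Set (EuclideanSpace ℝ (Fin 3)))) ∧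
    {Q : EuclideanSpace ℝ (Fin 3) ≃ₗᵢ[ℝ] EuclideanSpace ℝ (Fin 3) |
      ∃ g ∈ G, g.linearIsometryEquiv = Q}.Finite := by
  set E := EuclideanSpace ℝ (Fin 3)
  rw [Set.ext_iff] at hT
  -- the linear part of any element, expressed via the map itself
  have hlin : ∀ (e : E ≃ᵃⁱ[ℝ] E) (v : E), e.linearIsometryEquiv v = e v - e 0 := by
    intro e v
    have := e.map_vsub v 0
    simpa [vsub_eq_sub] using this
  -- inverse has inverse linear part
  have hsymm : ∀ g : E ≃ᵃⁱ[ℝ] E,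
      (g⁻¹).linearIsometryEquiv = g.linearIsometryEquiv.symm := by
    intro g
    refine LinearIsometryEquiv.ext fun v => ?_
    apply g.linearIsometryEquiv.injective
    rw [LinearIsometryEquiv.apply_symm_apply]
    have h1 : (g⁻¹).linearIsometryEquiv v = g.symm v - g.symm 0 := by
      simpa using hlin g⁻¹ v
    rw [h1]
    have h2 : g.linearIsometryEquiv (g.symm v -ᵥ g.symm 0) = g (g.symm v) -ᵥ g (g.symm 0) :=
      g.map_vsub _ _
    simpa [vsub_eq_sub] using h2
  -- key: linear parts map L into L
  have key : ∀ g ∈ G, ∀ t ∈ L, g.linearIsometryEquiv t ∈ L := by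
    intro g hg t ht
    have ht' : AffineIsometryEquiv.constVAdd ℝ E t ∈ G := (hT t).2 ht
    have hh : g * AffineIsometryEquiv.constVAdd ℝ E t * g⁻¹ ∈ G :=
      mul_mem (mul_mem hg ht') (inv_mem hg)
    have heq : g * AffineIsometryEquiv.constVAdd ℝ E t * g⁻¹
        = AffineIsometryEquiv.constVAdd ℝ E (g.linearIsometryEquiv t) := by
      ext x
      simp only [AffineIsometryEquiv.coe_mul, Function.comp_apply,
        AffineIsometryEquiv.coe_inv, AffineIsometryEquiv.coe_constVAdd]
      have := g.map_vadd (g.symm x) t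
      rw [show (AffineIsometryEquiv.constVAdd ℝ E t) (g.symm x) = t +ᵥ g.symm x from rfl, this,
        AffineIsometryEquiv.apply_symm_apply]
      rfl
    rw [heq] at hh
    exact (hT _).1 hh
  have himg : ∀ g ∈ G, g.linearIsometryEquiv '' (L : Set E) = (L : Set E) := by
    intro g hg
    apply Set.Subset.antisymm
    · rintro _ ⟨t, ht, rfl⟩
      exact key g hg t ht
    · intro t ht
      refine ⟨g.linearIsometryEquiv.symm t, ?_, by simp⟩
      have := key g⁻¹ (inv_mem hg) t ht
      rwa [hsymm g] at this
  refine ⟨himg, ?_⟩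
  -- finiteness
  subst hL
  set L := Submodule.span ℤ (Set.range b) with hLdef
  haveI : DiscreteTopology ((L : Set E)) := inferInstanceAs (DiscreteTopology L)
  have hclosed : IsClosed (L : Set E) := by
    haveI : DiscreteTopology (L.toAddSubgroup) := inferInstanceAs (DiscreteTopology L)
    exact AddSubgroup.isClosed_of_discrete (H := L.toAddSubgroup)
  have hfin : ∀ i : Fin 3, (Metric.closedBall (0 : E) ‖b i‖ ∩ (L : Set E)).Finite := fun i =>
    Metric.finite_isBounded_inter_isClosed DiscreteTopology.isDiscrete Metric.isBounded_closedBall hclosed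
  have hbL : ∀ i, b i ∈ L := fun i => Submodule.subset_span ⟨i, rfl⟩
  apply Set.Finite.of_finite_image (f := fun Q : E ≃ₗᵢ[ℝ] E => fun i : Fin 3 => Q (b i))
  · refine Set.Finite.subset (Set.Finite.pi hfin) ?_
    rintro _ ⟨Q, ⟨g, hg, rfl⟩, rfl⟩
    intro i _
    refine ⟨?_, key g hg (b i) (hbL i)⟩
    rw [Metric.mem_closedBall, dist_zero_right, g.linearIsometryEquiv.norm_map]
  · intro Q₁ _ Q₂ _ hQ
    have hmap : Q₁.toLinearEquiv.toLinearMap = Q₂.toLinearEquiv.toLinearMap :=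
      b.ext fun i => congrFun hQ i
    exact LinearIsometryEquiv.ext fun x => LinearMap.congr_fun hmap x
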